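/- arXiv:1905.04397 — 3 statements merged into one kernel-verified Lean document; each statement's English description precedes it below -/
import Mathlib

section
/- Let x be a real number with x > 3/4 and 16x^3 − 60x^2 + 24x − 3 > 0, and let α ≥ 0. Then there exist real numbers q, r, r̃ with 1 < q < 2, r > 1, r̃ > 1 and 1/r + 1/r̃ = 1, such that: (i) q·r < 4x/3; (ii) 2·q·r̃·(4x − 1) < (2x − 1)^2 (in particular the quantity (2x − 1)^2 − 2·q·r̃·(4x − 1) is positive, so v := (1/2)(−(2x − 1) + √((2x − 1)^2 − 2·q·r̃·(4x − 1))) is a well-defined real number); and (iii) q·r̃·(α − 1) > −2x − v. -/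
set_option maxHeartbeats 2000000


/-- Exponent selection: if `x > 3/4` with `16x^3 − 60x^2 + 24x − 3 > 0` and `α ≥ 0`, then
there exist `q, r, r̃` with `1 < q < 2`, `r, r̃ > 1`, `1/r + 1/r̃ = 1`, such that
(i) `q·r < 4x/3`; (ii) `2·q·r̃·(4x − 1) < (2x − 1)^2`; and
(iii) `q·r̃·(α − 1) > −2x − v` where
`v = (1/2)(−(2x − 1) + √((2x − 1)^2 − 2·q·r̃·(4x − 1)))`. -/
theorem exponent_selection (x α : ℝ) (hx : 3 / 4 < x)
    (hcubic : 16 * x ^ 3 - 60 * x ^ 2 + 24 * x - 3 > 0) (hα : 0 ≤ α) :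
    ∃ q r rt : ℝ, 1 < q ∧ q < 2 ∧ 1 < r ∧ 1 < rt ∧ 1 / r + 1 / rt = 1 ∧
      q * r < 4 * x / 3 ∧
      2 * (q * rt) * (4 * x - 1) < (2 * x - 1) ^ 2 ∧
      q * rt * (α - 1) >
        -(2 * x) - (1 / 2) * (-(2 * x - 1) +
          Real.sqrt ((2 * x - 1) ^ 2 - 2 * (q * rt) * (4 * x - 1))) := by
  have hxpos : (0:ℝ) < x := by linarith
  have h4x : (0:ℝ) < 4 * x - 1 := by linarith
  have h2x : (0:ℝ) < 2 * x - 1 := by linarith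
  obtain ⟨A, hAdef⟩ : ∃ A : ℝ, A = 4 * x / 3 := ⟨_, rfl⟩
  obtain ⟨C, hCdef⟩ : ∃ C : ℝ, C = (2 * x - 1) ^ 2 / (2 * (4 * x - 1)) := ⟨_, rfl⟩
  have hApos : 0 < A := by rw [hAdef]; positivity
  have hCpos : 0 < C := by rw [hCdef]; positivity
  obtain ⟨s, hsdef⟩ : ∃ s : ℝ, s = 1 / A + 1 / C := ⟨_, rfl⟩
  have hspos : 0 < s := by rw [hsdef]; positivity
  have hP : 0 < 4 * x * (2 * x - 1) ^ 2 := by positivity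
  have key : s * (4 * x * (2 * x - 1) ^ 2)
      = 3 * (2 * x - 1) ^ 2 + 2 * (4 * x - 1) * (4 * x) := by
    rw [hsdef, hAdef, hCdef]
    field_simp
    field_simp [(by linarith : (0:ℝ) < x * 2 - 1).ne']
  have hs1 : s < 1 := by nlinarith [key, hP]
  obtain ⟨q, hqdef⟩ : ∃ q : ℝ, q = 2 / (1 + s) := ⟨_, rfl⟩
  have hq1 : 1 < q := by rw [hqdef, lt_div_iff₀ (by linarith)]; linarith
  have hq2 : q < 2 := by rw [hqdef, div_lt_iff₀ (by linarith)]; nlinarith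
  have hqpos : 0 < q := by linarith
  have hqs : q * s < 1 := by
    rw [hqdef, div_mul_eq_mul_div, div_lt_one (by linarith)]; linarith
  obtain ⟨δ, hδdef⟩ : ∃ δ : ℝ, δ = (1 - q * s) / 2 := ⟨_, rfl⟩
  have hδpos : 0 < δ := by rw [hδdef]; linarith
  obtain ⟨u, hudef⟩ : ∃ u : ℝ, u = q / A + δ := ⟨_, rfl⟩
  obtain ⟨w, hwdef⟩ : ∃ w : ℝ, w = q / C + δ := ⟨_, rfl⟩
  have hupos : 0 < u := by rw [hudef]; positivity
  have hwpos : 0 < w := by rw [hwdef]; positivity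
  have huw : u + w = 1 := by
    rw [hudef, hwdef, hδdef, hsdef]
    field_simp
    ring
  have hu1 : u < 1 := by linarith
  have hw1 : w < 1 := by linarith
  have hAu : A * u = q + A * δ := by
    rw [hudef, hAdef]; field_simp
  have hCw : C * w = q + C * δ := by
    rw [hwdef]; field_simp
  have hqw : q * (1 / w) < C := by
    rw [mul_one_div, div_lt_iff₀ hwpos, hCw]
    linarith [mul_pos hCpos hδpos]
  have hqwC : 2 * (q * (1 / w)) * (4 * x - 1) < (2 * x - 1) ^ 2 := by
    have h := hqw
    rw [hCdef, lt_div_iff₀ (by positivity : (0:ℝ) < 2 * (4 * x - 1))] at h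
    nlinarith [h]
  refine ⟨q, 1 / u, 1 / w, hq1, hq2, one_lt_one_div hupos hu1,
    one_lt_one_div hwpos hw1, ?_, ?_, hqwC, ?_⟩
  · rw [one_div_one_div, one_div_one_div]; exact huw
  · rw [mul_one_div, div_lt_iff₀ hupos, ← hAdef, hAu]
    linarith [mul_pos hApos hδpos]
  · have hClt : C < x + 1 / 2 := by
      rw [hCdef, div_lt_iff₀ (by positivity)]
      nlinarith
    have hqwpos : 0 < q * (1 / w) := by positivity
    obtain ⟨S, hS⟩ : ∃ S : ℝ,
        S = Real.sqrt ((2 * x - 1) ^ 2 - 2 * (q * (1 / w)) * (4 * x - 1)) := ⟨_, rfl⟩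
    rw [← hS]
    have hsq : 0 ≤ S := by rw [hS]; exact Real.sqrt_nonneg _
    obtain ⟨t, ht⟩ : ∃ t : ℝ, t = q * (1 / w) := ⟨_, rfl⟩
    rw [← ht] at hqw hqwpos ⊢
    have hta : t * (α - 1) + t = t * α := by ring
    have h0 : 0 ≤ t * α := mul_nonneg hqwpos.le hα
    clear hS ht key hqdef hsdef hδdef hudef hwdef hCdef hAdef huw hAu hCw hqwC hCpos hcubic
    linarith [hsq, hqw, hClt, hta, h0]
end

section
/- Let (Ω, F, ℙ) be a probability space, F : Ω → ℝ a random variable, and Z : Ω → ℝ an integrable random variable. For a < b define φ_{a,b}(y) = ∫_{−∞}^{y} 𝟙_{[a,b]}(z) dz = min(y, b) − min(y, a). Suppose that ℙ(a ≤ F ≤ b) = 𝔼[φ_{a,b}(F) · Z] for all real a < b. Then the law of F is absolutely continuous with respect to Lebesgue measure, with density f_F(x) = 𝔼[𝟙_{{F > x}} Z]; moreover f_F is continuous on ℝ and satisfies 0 ≤ f_F(x) ≤ 𝔼[|Z|] for all x, so f_F is bounded. -/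
open MeasureTheory

section Aux

open Set

lemma density_from_ibp_vol (a b c : ℝ) (hab : a ≤ b) :
    ((volume : Measure ℝ) (Ioc a b ∩ Iio c)).toReal = min c b - min c a := by
  rcases le_or_gt c a with hca | hac
  · have : Ioc a b ∩ Iio c = ∅ := by
      ext x; simp only [mem_inter_iff, mem_Iio, mem_Ioc, mem_empty_iff_false, iff_false]
      rintro ⟨⟨h1, h2⟩, h3⟩; linarith
    rw [this]
    have h1 : min c b = c := min_eq_left (hca.trans hab)
    have h2 : min c a = c := min_eq_left hca
    simp [h1, h2]
  · have hsub1 : Ioo a (min b c) ⊆ Ioc a b ∩ Iio c := by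
      rintro x ⟨h1, h2⟩
      exact ⟨⟨h1, le_of_lt (lt_of_lt_of_le h2 (min_le_left _ _))⟩,
        lt_of_lt_of_le h2 (min_le_right _ _)⟩
    have hsub2 : Ioc a b ∩ Iio c ⊆ Ioc a (min b c) := by
      rintro x ⟨⟨h2, h3⟩, h1⟩
      exact ⟨h2, le_min h3 (le_of_lt h1)⟩
    have hle1 := measure_mono (μ := (volume : Measure ℝ)) hsub1
    have hle2 := measure_mono (μ := (volume : Measure ℝ)) hsub2
    rw [Real.volume_Ioo] at hle1
    rw [Real.volume_Ioc] at hle2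
    have hvol : (volume : Measure ℝ) (Ioc a b ∩ Iio c) = ENNReal.ofReal (min b c - a) :=
      le_antisymm hle2 hle1
    rw [hvol, ENNReal.toReal_ofReal]
    · rw [min_comm b c, min_eq_right (le_of_lt hac)]
    · rcases le_total b c with hbc | hcb
      · rw [min_eq_left hbc]; linarith
      · rw [min_eq_right hcb]; linarith

lemma density_from_ibp_inner (a b c z : ℝ) (hab : a ≤ b) :
    ∫ x in Ioc a b, (if x < c then z else 0) = (min c b - min c a) * z := by
  have hind : (fun x => if x < c then z else 0) = (Iio c).indicator (fun _ => z) := by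
    ext x; simp [indicator_apply, mem_Iio]
  rw [hind, setIntegral_indicator measurableSet_Iio, setIntegral_const,
    measureReal_def, density_from_ibp_vol a b c hab, smul_eq_mul]

lemma density_from_ibp_min_sub (c x ε : ℝ) (hε : 0 ≤ ε) :
    0 ≤ min c (x + ε) - min c x ∧ min c (x + ε) - min c x ≤ ε := by
  constructor
  · have : min c x ≤ min c (x + ε) := min_le_min le_rfl (by linarith)
    linarith
  · rcases le_total c x with hcx | hxc
    · rw [min_eq_left hcx, min_eq_left (hcx.trans (by linarith))]; linarith
    · rw [min_eq_right hxc]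
      have := min_le_right c (x + ε)
      linarith

end Aux

/-- Measure-theoretic core of the extended Skorokhod-integral density lemma: if
`ℙ(a ≤ F ≤ b) = 𝔼[φ_{a,b}(F)·Z]` for all `a < b`, where
`φ_{a,b}(y) = min(y,b) − min(y,a)`, then the law of `F` is absolutely continuous with
respect to Lebesgue measure with density `f_F(x) = 𝔼[𝟙_{F > x} Z]`; moreover `f_F`
is continuous and satisfies `0 ≤ f_F(x) ≤ 𝔼[|Z|]` for all `x`, so `f_F` is bounded. -/
theorem density_from_ibp {Ω : Type*} [MeasurableSpace Ω]
    (ℙ : Measure Ω) [IsProbabilityMeasure ℙ]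
    (F Z : Ω → ℝ) (hF : Measurable F) (hZ : Integrable Z ℙ)
    (h : ∀ a b : ℝ, a < b →
      (ℙ {ω | a ≤ F ω ∧ F ω ≤ b}).toReal =
        ∫ ω, (min (F ω) b - min (F ω) a) * Z ω ∂ℙ) :
    (Measure.map F ℙ) ≪ volume ∧
    Measure.map F ℙ =
      volume.withDensity
        (fun x => ENNReal.ofReal (∫ ω, (if x < F ω then Z ω else 0) ∂ℙ)) ∧
    Continuous (fun x : ℝ => ∫ ω, (if x < F ω then Z ω else 0) ∂ℙ) ∧
    ∀ x : ℝ,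
      0 ≤ (∫ ω, (if x < F ω then Z ω else 0) ∂ℙ) ∧
      (∫ ω, (if x < F ω then Z ω else 0) ∂ℙ) ≤ ∫ ω, |Z ω| ∂ℙ := by
  set g : ℝ → ℝ := fun x => ∫ ω, (if x < F ω then Z ω else 0) ∂ℙ with hg
  -- measurability / integrability of the slices
  have hmeas : ∀ x : ℝ, AEStronglyMeasurable (fun ω => if x < F ω then Z ω else 0) ℙ := by
    intro x
    have hset : MeasurableSet {ω | x < F ω} := hF measurableSet_Ioi
    have : (fun ω => if x < F ω then Z ω else 0) = Set.indicator {ω | x < F ω} Z := by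
      ext ω; simp [Set.indicator_apply, Set.mem_setOf_eq]
    rw [this]
    exact hZ.1.indicator hset
  have hIx : ∀ x : ℝ, Integrable (fun ω => if x < F ω then Z ω else 0) ℙ := by
    intro x
    refine Integrable.mono' hZ.abs (hmeas x) (ae_of_all _ fun ω => ?_)
    by_cases hx : x < F ω <;> simp [hx, Real.norm_eq_abs, abs_nonneg]
  -- integrability on products and the key Fubini identity
  have hprod : ∀ a b : ℝ,
      Integrable (fun p : ℝ × Ω => if p.1 < F p.2 then Z p.2 else 0)
        ((volume.restrict (Set.Ioc a b)).prod ℙ) := by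
    intro a b
    have hZsnd : Integrable (fun p : ℝ × Ω => Z p.2)
        ((volume.restrict (Set.Ioc a b)).prod ℙ) := by
      rw [integrable_prod_iff (hZ.1.comp_snd)]
      refine ⟨Filter.Eventually.of_forall fun x => hZ, ?_⟩
      simp only [Real.norm_eq_abs]
      exact integrable_const _
    have hS : MeasurableSet {p : ℝ × Ω | p.1 < F p.2} :=
      measurableSet_lt measurable_fst (hF.comp measurable_snd)
    have heq : (fun p : ℝ × Ω => if p.1 < F p.2 then Z p.2 else 0)
        = Set.indicator {p : ℝ × Ω | p.1 < F p.2} (fun p => Z p.2) := by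
      ext p; simp [Set.indicator_apply, Set.mem_setOf_eq]
    refine Integrable.mono' hZsnd.abs ?_ (ae_of_all _ fun p => ?_)
    · rw [heq]; exact hZsnd.1.indicator hS
    · by_cases hp : p.1 < F p.2 <;> simp [hp, Real.norm_eq_abs, abs_nonneg]
  have hIntg : ∀ a b : ℝ, IntegrableOn g (Set.Ioc a b) := by
    intro a b
    exact (hprod a b).integral_prod_left
  have key : ∀ a b : ℝ, a < b →
      ∫ x in Set.Ioc a b, g x = (ℙ {ω | a ≤ F ω ∧ F ω ≤ b}).toReal := by
    intro a b hab
    have hswap := integral_integral_swap (f := fun (x : ℝ) (ω : Ω) =>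
      if x < F ω then Z ω else 0) (μ := volume.restrict (Set.Ioc a b)) (ν := ℙ) (hprod a b)
    rw [hg]
    rw [hswap, h a b hab]
    refine integral_congr_ae (ae_of_all _ fun ω => ?_)
    exact density_from_ibp_inner a b (F ω) (Z ω) hab.le
  -- no atoms
  have hatom : ∀ x : ℝ, ℙ {ω | F ω = x} = 0 := by
    intro x
    have hCnn : 0 ≤ ∫ ω, |Z ω| ∂ℙ := integral_nonneg fun ω => abs_nonneg _
    have hbound : ∀ ε : ℝ, 0 < ε →
        (ℙ {ω | F ω = x}).toReal ≤ ε * ∫ ω, |Z ω| ∂ℙ := by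
      intro ε hε
      have hsub : {ω | F ω = x} ⊆ {ω | x ≤ F ω ∧ F ω ≤ x + ε} := by
        intro ω hω; simp only [Set.mem_setOf_eq] at hω ⊢; constructor <;> linarith
      have hmono := measure_mono (μ := ℙ) hsub
      have h1 : (ℙ {ω | F ω = x}).toReal ≤ (ℙ {ω | x ≤ F ω ∧ F ω ≤ x + ε}).toReal :=
        ENNReal.toReal_mono (measure_ne_top _ _) hmono
      have h2 := h x (x + ε) (by linarith)
      have hle : ∫ ω, (min (F ω) (x + ε) - min (F ω) x) * Z ω ∂ℙ
          ≤ ∫ ω, ε * |Z ω| ∂ℙ := by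
        have hint1 : Integrable (fun ω => (min (F ω) (x + ε) - min (F ω) x) * Z ω) ℙ := by
          refine Integrable.mono' ((hZ.abs).const_mul ε)
            ((((hF.min measurable_const).sub
              (hF.min measurable_const)).aestronglyMeasurable).mul hZ.1)
            (ae_of_all _ fun ω => ?_)
          obtain ⟨hφ0, hφε⟩ := density_from_ibp_min_sub (F ω) x ε hε.le
          rw [Real.norm_eq_abs, abs_mul]
          have : |min (F ω) (x + ε) - min (F ω) x| ≤ ε := abs_le.2 ⟨by linarith, hφε⟩
          exact mul_le_mul_of_nonneg_right this (abs_nonneg _) |>.trans_eq rfl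
        refine integral_mono hint1 (hZ.abs.const_mul ε) fun ω => ?_
        obtain ⟨hφ0, hφε⟩ := density_from_ibp_min_sub (F ω) x ε hε.le
        have h3 : Z ω ≤ |Z ω| := le_abs_self _
        have h4 : 0 ≤ |Z ω| := abs_nonneg _
        nlinarith [mul_nonneg hφ0 (sub_nonneg.2 h3),
          mul_nonneg (sub_nonneg.2 hφε) h4]
      calc (ℙ {ω | F ω = x}).toReal ≤ (ℙ {ω | x ≤ F ω ∧ F ω ≤ x + ε}).toReal := h1
        _ = ∫ ω, (min (F ω) (x + ε) - min (F ω) x) * Z ω ∂ℙ := h2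
        _ ≤ ∫ ω, ε * |Z ω| ∂ℙ := hle
        _ = ε * ∫ ω, |Z ω| ∂ℙ := integral_const_mul ε _
    have hzero : (ℙ {ω | F ω = x}).toReal = 0 := by
      by_contra hne
      have hpos : 0 < (ℙ {ω | F ω = x}).toReal :=
        lt_of_le_of_ne ENNReal.toReal_nonneg (Ne.symm hne)
      set t := (ℙ {ω | F ω = x}).toReal
      set C := ∫ ω, |Z ω| ∂ℙ
      have hεpos : 0 < t / (2 * (C + 1)) := by positivity
      have := hbound _ hεpos
      have hkey : t / (2 * (C + 1)) * C ≤ t / 2 := by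
        rw [div_mul_eq_mul_div, div_le_div_iff₀ (by linarith) (by norm_num)]
        nlinarith [mul_nonneg hpos.le hCnn]
      linarith
    have hfin : ℙ {ω | F ω = x} ≠ ⊤ := measure_ne_top _ _
    rwa [ENNReal.toReal_eq_zero_iff, or_iff_left hfin] at hzero
  -- continuity
  have hcont : Continuous g := by
    rw [continuous_iff_continuousAt]
    intro x₀
    have hae : ∀ᵐ ω ∂ℙ, F ω ≠ x₀ := by
      rw [ae_iff]
      simpa using hatom x₀
    refine tendsto_integral_filter_of_dominated_convergence (fun ω => |Z ω|)
      (Filter.Eventually.of_forall fun x => hmeas x)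
      (Filter.Eventually.of_forall fun x => ae_of_all _ fun ω => ?_)
      hZ.abs ?_
    · by_cases hx : x < F ω <;> simp [hx, Real.norm_eq_abs, abs_nonneg]
    · filter_upwards [hae] with ω hω
      rcases lt_or_gt_of_ne hω.symm with hlt | hgt
      · -- x₀ < F ω
        have hev : ∀ᶠ x in nhds x₀, (if x < F ω then Z ω else 0) = Z ω := by
          filter_upwards [Iio_mem_nhds hlt] with x hx
          simp [Set.mem_Iio.1 hx]
        rw [if_pos hlt]
        exact Filter.Tendsto.congr' (Filter.EventuallyEq.symm hev) tendsto_const_nhds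
      · -- F ω < x₀
        have hev : ∀ᶠ x in nhds x₀, (if x < F ω then Z ω else 0) = 0 := by
          filter_upwards [Ioi_mem_nhds hgt] with x hx
          simp [not_lt.2 (le_of_lt (Set.mem_Ioi.1 hx))]
        rw [if_neg (not_lt.2 hgt.le)]
        exact Filter.Tendsto.congr' (Filter.EventuallyEq.symm hev) tendsto_const_nhds
  -- nonnegativity
  have hnn : ∀ x : ℝ, 0 ≤ g x := by
    intro x
    by_contra hneg
    push_neg at hneg
    have hε : (0 : ℝ) < -g x / 2 := by linarith
    obtain ⟨δ, hδ, hball⟩ := Metric.continuousAt_iff.1 (hcont.continuousAt (x := x)) _ hε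
    have hsmall : ∀ y ∈ Set.Ioc x (x + δ / 2), g y ≤ g x / 2 := by
      intro y hy
      obtain ⟨hy1, hy2⟩ := hy
      have hdist : dist y x < δ := by
        rw [Real.dist_eq, abs_lt]; constructor <;> linarith
      have := hball hdist
      rw [Real.dist_eq, abs_lt] at this
      linarith [this.2]
    have hxlt : x < x + δ / 2 := by linarith
    have h0le : 0 ≤ ∫ y in Set.Ioc x (x + δ / 2), g y := by
      rw [key x (x + δ / 2) hxlt]
      exact ENNReal.toReal_nonneg
    have hub : ∫ y in Set.Ioc x (x + δ / 2), g y
        ≤ ∫ _ in Set.Ioc x (x + δ / 2), (g x / 2) := by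
      exact setIntegral_mono_on (hIntg x (x + δ / 2)) (integrableOn_const (by
        rw [Real.volume_Ioc]; exact ENNReal.ofReal_ne_top)) measurableSet_Ioc hsmall
    rw [setIntegral_const, measureReal_def, Real.volume_Ioc, smul_eq_mul,
      ENNReal.toReal_ofReal (by linarith)] at hub
    nlinarith
  -- measure identification
  have hν : Measure.map F ℙ =
      volume.withDensity (fun x => ENNReal.ofReal (g x)) := by
    have : IsFiniteMeasure (Measure.map F ℙ) := Measure.isFiniteMeasure_map ℙ F
    refine Measure.ext_of_Ioc (Measure.map F ℙ) _ fun a b hab => ?_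
    have hmap : Measure.map F ℙ (Set.Ioc a b) = ℙ {ω | a ≤ F ω ∧ F ω ≤ b} := by
      rw [Measure.map_apply hF measurableSet_Ioc]
      have hpre : F ⁻¹' Set.Ioc a b = {ω | a < F ω ∧ F ω ≤ b} := rfl
      rw [hpre]
      refine le_antisymm (measure_mono fun ω hω => ⟨hω.1.le, hω.2⟩) ?_
      have hcover : {ω | a ≤ F ω ∧ F ω ≤ b} ⊆ {ω | F ω = a} ∪ {ω | a < F ω ∧ F ω ≤ b} := by
        intro ω hω
        rcases eq_or_lt_of_le hω.1 with heq | hlt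
        · exact Or.inl heq.symm
        · exact Or.inr ⟨hlt, hω.2⟩
      calc ℙ {ω | a ≤ F ω ∧ F ω ≤ b}
          ≤ ℙ ({ω | F ω = a} ∪ {ω | a < F ω ∧ F ω ≤ b}) := measure_mono hcover
        _ ≤ ℙ {ω | F ω = a} + ℙ {ω | a < F ω ∧ F ω ≤ b} := measure_union_le _ _
        _ = ℙ {ω | a < F ω ∧ F ω ≤ b} := by rw [hatom a, zero_add]
    have hdens : volume.withDensity (fun x => ENNReal.ofReal (g x)) (Set.Ioc a b)
        = ℙ {ω | a ≤ F ω ∧ F ω ≤ b} := by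
      rw [withDensity_apply _ measurableSet_Ioc,
        ← ofReal_integral_eq_lintegral_ofReal (hIntg a b) (ae_of_all _ fun y => hnn y),
        key a b hab, ENNReal.ofReal_toReal (measure_ne_top _ _)]
    rw [hmap, hdens]
  refine ⟨?_, hν, hcont, fun x => ⟨hnn x, ?_⟩⟩
  · rw [hν]
    exact withDensity_absolutelyContinuous _ _
  · refine integral_mono (hIx x) hZ.abs fun ω => ?_
    by_cases hx : x < F ω <;> simp [hx, le_abs_self, abs_nonneg]
end

section
/- Let (Ω, F, ℙ) be a probability space, F : Ω → ℝ a random variable, and Z : Ω → ℝ an integrable random variable with 𝔼[Z] = 0. Suppose the law of F is absolutely continuous with respect to Lebesgue measure with density f(x) = 𝔼[𝟙_{{F > x}} Z]. Then for every α ≥ 0 such that 𝔼[|F|^α · |Z|] < ∞, one has sup_{x ∈ ℝ} |x|^α · f(x) ≤ 𝔼[|F|^α · |Z|]. -/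
open MeasureTheory

/-- Weighted supremum bound on the density: if `Z` is integrable with `𝔼[Z] = 0` and the
law of `F` is absolutely continuous with density `f(x) = 𝔼[𝟙_{F > x} Z]`, then for every
`α ≥ 0` with `𝔼[|F|^α · |Z|] < ∞`, one has `sup_x |x|^α · f(x) ≤ 𝔼[|F|^α · |Z|]`. -/
theorem weighted_density_bound {Ω : Type*} [MeasurableSpace Ω]
    (ℙ : Measure Ω) [IsProbabilityMeasure ℙ]
    (F Z : Ω → ℝ) (hF : Measurable F) (hZ : Integrable Z ℙ)
    (hZ0 : ∫ ω, Z ω ∂ℙ = 0)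
    (f : ℝ → ℝ) (hf : ∀ x : ℝ, f x = ∫ ω, (if x < F ω then Z ω else 0) ∂ℙ)
    (hd : Measure.map F ℙ = volume.withDensity (fun x => ENNReal.ofReal (f x)))
    (α : ℝ) (hα : 0 ≤ α)
    (hint : Integrable (fun ω => |F ω| ^ α * |Z ω|) ℙ) :
    ∀ x : ℝ, |x| ^ α * f x ≤ ∫ ω, |F ω| ^ α * |Z ω| ∂ℙ := by
  intro x
  have hgi : Integrable (fun ω => if x < F ω then Z ω else 0) ℙ := by
    have := hZ.indicator (hF (measurableSet_Ioi (a := x)))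
    exact this.congr (Filter.Eventually.of_forall fun ω => by by_cases h : x < F ω <;> simp [Set.indicator_apply, h])
  have hhi : Integrable (fun ω => if F ω ≤ x then Z ω else 0) ℙ := by
    have := hZ.indicator (hF (measurableSet_Iic (a := x)))
    exact this.congr (Filter.Eventually.of_forall fun ω => by by_cases h : F ω ≤ x <;> simp [Set.indicator_apply, h])
  rcases le_or_gt 0 x with hx | hx
  · -- x ≥ 0
    have key : ∀ ω, |x| ^ α * (if x < F ω then Z ω else 0) ≤ |F ω| ^ α * |Z ω| := by
      intro ω
      by_cases h : x < F ω
      · simp only [h, if_pos]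
        have h1 : |x| ≤ |F ω| := by
          rw [abs_of_nonneg hx, abs_of_pos (lt_of_le_of_lt hx h)]; exact h.le
        calc |x| ^ α * Z ω ≤ |x| ^ α * |Z ω| :=
              mul_le_mul_of_nonneg_left (le_abs_self _) (Real.rpow_nonneg (abs_nonneg _) _)
          _ ≤ |F ω| ^ α * |Z ω| :=
              mul_le_mul_of_nonneg_right (Real.rpow_le_rpow (abs_nonneg _) h1 hα)
                (abs_nonneg _)
      · simp only [h, if_neg, not_false_iff, mul_zero]
        positivity
    calc |x| ^ α * f x = ∫ ω, |x| ^ α * (if x < F ω then Z ω else 0) ∂ℙ := by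
          rw [hf, integral_const_mul]
      _ ≤ ∫ ω, |F ω| ^ α * |Z ω| ∂ℙ :=
          integral_mono (hgi.const_mul _) hint key
  · -- x < 0
    have hsplit : f x = - ∫ ω, (if F ω ≤ x then Z ω else 0) ∂ℙ := by
      have : ∀ ω, Z ω = (if x < F ω then Z ω else 0) + (if F ω ≤ x then Z ω else 0) := by
        intro ω
        rcases le_or_gt (F ω) x with h | h
        · simp [h, not_lt.mpr h]
        · simp [h, not_le.mpr h]
      have h2 : ∫ ω, Z ω ∂ℙ
          = (∫ ω, (if x < F ω then Z ω else 0) ∂ℙ) + ∫ ω, (if F ω ≤ x then Z ω else 0) ∂ℙ := by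
        rw [← integral_add hgi hhi]
        exact integral_congr_ae (Filter.Eventually.of_forall this)
      rw [hf]
      linarith [h2.symm.trans hZ0]
    have key : ∀ ω, -(|x| ^ α * (if F ω ≤ x then Z ω else 0)) ≤ |F ω| ^ α * |Z ω| := by
      intro ω
      by_cases h : F ω ≤ x
      · simp only [h, if_pos]
        have h1 : |x| ≤ |F ω| := by
          rw [abs_of_neg hx, abs_of_neg (lt_of_le_of_lt h hx)]; linarith
        calc -(|x| ^ α * Z ω) = |x| ^ α * (-Z ω) := by ring
          _ ≤ |x| ^ α * |Z ω| :=
              mul_le_mul_of_nonneg_left (neg_le_abs _) (Real.rpow_nonneg (abs_nonneg _) _)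
          _ ≤ |F ω| ^ α * |Z ω| :=
              mul_le_mul_of_nonneg_right (Real.rpow_le_rpow (abs_nonneg _) h1 hα)
                (abs_nonneg _)
      · simp only [h, if_neg, not_false_iff, mul_zero, neg_zero]
        positivity
    calc |x| ^ α * f x = ∫ ω, -(|x| ^ α * (if F ω ≤ x then Z ω else 0)) ∂ℙ := by
          rw [hsplit, mul_neg, ← integral_const_mul, ← integral_neg]
      _ ≤ ∫ ω, |F ω| ^ α * |Z ω| ∂ℙ :=
          integral_mono ((hhi.const_mul _).neg) hint key
end
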